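/- Let H = ℓ²(ℕ). Every frame {f_j} of H is a multiple of the sum of an orthonormal basis and a Riesz basis: there exist c > 0, an orthonormal basis {u_j}, and a Riesz basis {r_j} of H such that f_j = c(u_j + r_j) for all j. -/

import Mathlib

open scoped InnerProductSpace

open scoped ENNReal

private lemma rpow_two' (x : ℝ) : x ^ (2 : ℝ) = x ^ 2 := by
  rw [show (2 : ℝ) = ((2 : ℕ) : ℝ) by norm_num, Real.rpow_natCast]

set_option maxHeartbeats 1000000 in
/-- Every frame `{f_j}` of `H = ℓ²` is a multiple of the sum of an orthonormal basis and a
Riesz basis: `f_j = c (u_j + r_j)` with `{u_j}` an orthonormal basis and `r_j = T (b_j)` for a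
bounded invertible operator `T` and an orthonormal basis `{b_j}`. -/
theorem stmt18 (f : ℕ → lp (fun _ : ℕ => ℂ) 2) (C D : ℝ) (hC : 0 < C)
    (hframe : ∀ v : lp (fun _ : ℕ => ℂ) 2, C * ‖v‖ ^ 2 ≤ ∑' j, ‖⟪v, f j⟫_ℂ‖ ^ 2 ∧
      ∑' j, ‖⟪v, f j⟫_ℂ‖ ^ 2 ≤ D * ‖v‖ ^ 2) :
    ∃ c : ℝ, 0 < c ∧
      ∃ (u : HilbertBasis ℕ ℂ (lp (fun _ : ℕ => ℂ) 2))
        (T : lp (fun _ : ℕ => ℂ) 2 ≃L[ℂ] lp (fun _ : ℕ => ℂ) 2)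
        (b : HilbertBasis ℕ ℂ (lp (fun _ : ℕ => ℂ) 2)),
        ∀ j, f j = (c : ℂ) • (u j + T (b j)) := by
  classical
  -- `D` is nonnegative (indeed positive)
  have hD : 0 ≤ D := by
    have hv₀ : (lp.single 2 0 (1 : ℂ) : lp (fun _ : ℕ => ℂ) 2) ≠ 0 := by
      intro h
      have h1 := lp.single_apply_self (E := fun _ : ℕ => ℂ) 2 (0 : ℕ) (1 : ℂ)
      rw [h] at h1
      simpa using h1
    have h0 : 0 < ‖(lp.single 2 0 (1 : ℂ) : lp (fun _ : ℕ => ℂ) 2)‖ := norm_pos_iff.mpr hv₀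
    have h1 := (hframe (lp.single 2 0 (1 : ℂ))).1
    have h2 := (hframe (lp.single 2 0 (1 : ℂ))).2
    nlinarith [le_trans h1 h2, pow_pos h0 2]
  -- summability of the frame coefficients
  have hsum : ∀ v : lp (fun _ : ℕ => ℂ) 2, Summable (fun j => ‖⟪v, f j⟫_ℂ‖ ^ 2) := by
    intro v
    by_contra h
    have h0 : ∑' j, ‖⟪v, f j⟫_ℂ‖ ^ 2 = 0 := tsum_eq_zero_of_not_summable h
    have h1 := (hframe v).1
    rw [h0] at h1
    have hv : v = 0 := by
      have hx : ‖v‖ ^ 2 ≤ 0 := by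
        by_contra hx
        push_neg at hx
        nlinarith [mul_pos hC hx]
      have hn : ‖v‖ = 0 := by nlinarith [norm_nonneg v]
      exact norm_eq_zero.mp hn
    apply h
    subst hv
    simpa using summable_zero
  -- the analysis sequence lies in ℓ²
  have hmem : ∀ v : lp (fun _ : ℕ => ℂ) 2, Memℓp (fun j => ⟪f j, v⟫_ℂ) 2 := by
    intro v
    apply memℓp_gen
    have key : ∀ j, ‖⟪f j, v⟫_ℂ‖ ^ ((2 : ℝ≥0∞).toReal) = ‖⟪v, f j⟫_ℂ‖ ^ 2 := by
      intro j
      have ht : ((2 : ℝ≥0∞).toReal) = (2 : ℝ) := by norm_num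
      rw [ht, rpow_two', norm_inner_symm]
    simpa only [key] using hsum v
  -- the analysis operator θ
  set θlin : lp (fun _ : ℕ => ℂ) 2 →ₗ[ℂ] lp (fun _ : ℕ => ℂ) 2 :=
    { toFun := fun v => ⟨fun j => ⟪f j, v⟫_ℂ, hmem v⟩
      map_add' := fun v w => by
        apply lp.ext
        funext j
        simp [inner_add_right]
        rfl
      map_smul' := fun a v => by
        apply lp.ext
        funext j
        simp [inner_smul_right] } with hθlin
  have hnorm_sq : ∀ v, ‖θlin v‖ ^ 2 = ∑' j, ‖⟪v, f j⟫_ℂ‖ ^ 2 := by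
    intro v
    have h1 := lp.norm_rpow_eq_tsum (p := 2) (E := fun _ : ℕ => ℂ) (by norm_num) (θlin v)
    have ht : ((2 : ℝ≥0∞).toReal) = (2 : ℝ) := by norm_num
    rw [ht] at h1
    simp only [rpow_two'] at h1
    rw [h1]
    congr 1
    funext j
    have : (θlin v : ∀ _ : ℕ, ℂ) j = ⟪f j, v⟫_ℂ := rfl
    rw [this, norm_inner_symm]
  have hb : ∀ v, ‖θlin v‖ ≤ Real.sqrt D * ‖v‖ := by
    intro v
    have h2 := (hframe v).2
    calc ‖θlin v‖ = Real.sqrt (‖θlin v‖ ^ 2) := (Real.sqrt_sq (norm_nonneg _)).symm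
      _ ≤ Real.sqrt (D * ‖v‖ ^ 2) := Real.sqrt_le_sqrt (by rw [hnorm_sq v]; exact h2)
      _ = Real.sqrt D * ‖v‖ := by
          rw [Real.sqrt_mul hD, Real.sqrt_sq (norm_nonneg _)]
  set θ : lp (fun _ : ℕ => ℂ) 2 →L[ℂ] lp (fun _ : ℕ => ℂ) 2 :=
    LinearMap.mkContinuous θlin (Real.sqrt D) hb with hθ
  set T : lp (fun _ : ℕ => ℂ) 2 →L[ℂ] lp (fun _ : ℕ => ℂ) 2 :=
    ContinuousLinearMap.adjoint θ with hTdef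
  have hTnorm : ‖T‖ ≤ Real.sqrt D := by
    rw [hTdef]
    rw [show ‖ContinuousLinearMap.adjoint θ‖ = ‖θ‖ from
      ContinuousLinearMap.adjoint.norm_map θ]
    exact LinearMap.mkContinuous_norm_le θlin (Real.sqrt_nonneg D) hb
  -- T sends the standard basis to the frame
  have hTe : ∀ j : ℕ, T (lp.single 2 j (1 : ℂ)) = f j := by
    intro j
    apply ext_inner_left ℂ
    intro w
    rw [hTdef, ContinuousLinearMap.adjoint_inner_right, lp.inner_single_right]
    have hw : (θ w : ∀ _ : ℕ, ℂ) j = ⟪f j, w⟫_ℂ := rfl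
    rw [hw]
    simp [RCLike.inner_apply]
  -- the constant
  set c : ℝ := Real.sqrt D + 1 with hcdef
  have hc : 0 < c := by positivity
  have hcC : ((c : ℝ) : ℂ) ≠ 0 := by
    exact_mod_cast hc.ne'
  -- the invertible operator  c⁻¹ T - 1
  set S : lp (fun _ : ℕ => ℂ) 2 →L[ℂ] lp (fun _ : ℕ => ℂ) 2 := ((c : ℂ)⁻¹) • T with hSdef
  have hSD : c⁻¹ * Real.sqrt D < 1 := by
    rw [inv_mul_lt_iff₀ hc, mul_one, hcdef]
    linarith [Real.sqrt_nonneg D]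
  have hSnorm : ‖S‖ < 1 := by
    have hb2 : ∀ x, ‖S x‖ ≤ (c⁻¹ * Real.sqrt D) * ‖x‖ := by
      intro x
      rw [hSdef, ContinuousLinearMap.smul_apply, norm_smul]
      have h1 : ‖((c : ℝ) : ℂ)⁻¹‖ = c⁻¹ := by
        rw [norm_inv, Complex.norm_real, Real.norm_eq_abs, abs_of_pos hc]
      rw [h1, mul_assoc]
      refine mul_le_mul_of_nonneg_left ?_ (by positivity)
      calc ‖T x‖ ≤ ‖T‖ * ‖x‖ := T.le_opNorm x
        _ ≤ Real.sqrt D * ‖x‖ := mul_le_mul_of_nonneg_right hTnorm (norm_nonneg x)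
    have hle : ‖S‖ ≤ c⁻¹ * Real.sqrt D :=
      ContinuousLinearMap.opNorm_le_bound S (by positivity) hb2
    exact lt_of_le_of_lt hle hSD
  set U : (lp (fun _ : ℕ => ℂ) 2 →L[ℂ] lp (fun _ : ℕ => ℂ) 2)ˣ := Units.oneSub S hSnorm
    with hUdef
  refine ⟨c, hc, HilbertBasis.ofRepr (LinearIsometryEquiv.refl ℂ (lp (fun _ : ℕ => ℂ) 2)),
    ContinuousLinearEquiv.ofUnit (-U),
    HilbertBasis.ofRepr (LinearIsometryEquiv.refl ℂ (lp (fun _ : ℕ => ℂ) 2)), fun j => ?_⟩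
  have hu : (HilbertBasis.ofRepr (LinearIsometryEquiv.refl ℂ (lp (fun _ : ℕ => ℂ) 2))) j
      = lp.single 2 j (1 : ℂ) := by
    rw [← HilbertBasis.repr_symm_single]
    rfl
  rw [hu]
  have happ : ContinuousLinearEquiv.ofUnit (-U) (lp.single 2 j (1 : ℂ))
      = ((c : ℂ)⁻¹) • f j - lp.single 2 j (1 : ℂ) := by
    show (-U).val (lp.single 2 j (1 : ℂ)) = _
    rw [Units.val_neg, hUdef]
    have h0 : (Units.oneSub S hSnorm).val = 1 - S := rfl
    rw [h0, ContinuousLinearMap.neg_apply, ContinuousLinearMap.sub_apply,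
      ContinuousLinearMap.one_apply, hSdef, ContinuousLinearMap.smul_apply, hTe j]
    abel
  rw [happ, add_sub_cancel, smul_smul, mul_inv_cancel₀ hcC, one_smul]
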